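/- Let X be a metric space, μ a finite measure on X, and j an assignment to points S_1,…,S_n. Suppose there exist measurable sets A ⊆ j⁻¹{l}, B ⊆ j⁻¹{m} with μ(A) = μ(B) > 0 and real numbers a > b such that d(U,S_l) − d(U,S_m) > a for all U ∈ A and d(U,S_l) − d(U,S_m) < b for all U ∈ B. Then the reassigned function j' (sending A to m, B to l, agreeing with j elsewhere) satisfies D(j') < D(j) and has the same measures of preimages: μ(j'⁻¹{k}) = μ(j⁻¹{k}) for all k. -/

import Mathlib

open MeasureTheory
open scoped Classical

/-- Reassigning a set `A ⊆ j⁻¹ {l}` of users to `m` and a set `B ⊆ j⁻¹ {m}` of the same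
measure to `l` strictly decreases the total distance when the gains exceed the losses,
and it preserves the measures of all preimages. -/
theorem stmt1 {X : Type*} [MetricSpace X] [MeasurableSpace X] [BorelSpace X]
    (μ : Measure X) [IsFiniteMeasure μ] {n : ℕ} (S : Fin n → X)
    (j : X → Fin n) (hj : Measurable j)
    (hint : Integrable (fun U => dist (S (j U)) U) μ)
    (m l : Fin n) (hml : m ≠ l)
    (A B : Set X) (hA : MeasurableSet A) (hB : MeasurableSet B)
    (hAj : A ⊆ j ⁻¹' {l}) (hBj : B ⊆ j ⁻¹' {m})
    (hAB : μ A = μ B) (hApos : 0 < μ A)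
    (a b : ℝ) (hab : a > b)
    (ha : ∀ U ∈ A, dist U (S l) - dist U (S m) > a)
    (hb : ∀ U ∈ B, dist U (S l) - dist U (S m) < b) :
    (∫ U, dist (S (if U ∈ A then m else if U ∈ B then l else j U)) U ∂μ <
      ∫ U, dist (S (j U)) U ∂μ) ∧
    ∀ k : Fin n,
      μ ((fun U => if U ∈ A then m else if U ∈ B then l else j U) ⁻¹' {k}) =
        μ (j ⁻¹' {k}) := by
  classical
  have hdisj : ∀ U, U ∈ A → U ∈ B → False := by
    intro U hUA hUB
    have h1 : j U = l := hAj hUA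
    have h2 : j U = m := hBj hUB
    exact hml (h2.symm.trans h1)
  set φ1 : X → ℝ := fun U => dist (S m) U - dist (S l) U with hφ1
  set φ2 : X → ℝ := fun U => dist (S l) U - dist (S m) U with hφ2
  have hφ1m : Measurable φ1 := by fun_prop
  have hφ2m : Measurable φ2 := by fun_prop
  set C : ℝ := dist (S m) (S l) with hC
  have hφ1b : ∀ U, |φ1 U| ≤ C := fun U => abs_dist_sub_le (S m) (S l) U
  have hφ2b : ∀ U, |φ2 U| ≤ C := by
    intro U
    have := abs_dist_sub_le (S l) (S m) U
    rwa [dist_comm (S l) (S m)] at this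
  have hCnn : 0 ≤ C := dist_nonneg
  have hb1 : ∀ U, |A.indicator φ1 U| ≤ C := by
    intro U
    by_cases h : U ∈ A
    · rw [Set.indicator_of_mem h]; exact hφ1b U
    · rw [Set.indicator_of_notMem h]; simpa using hCnn
  have hb2 : ∀ U, |B.indicator φ2 U| ≤ C := by
    intro U
    by_cases h : U ∈ B
    · rw [Set.indicator_of_mem h]; exact hφ2b U
    · rw [Set.indicator_of_notMem h]; simpa using hCnn
  have hint1 : Integrable (A.indicator φ1) μ :=
    Integrable.mono' (integrable_const C)
      ((hφ1m.indicator hA).aestronglyMeasurable) (Filter.Eventually.of_forall hb1)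
  have hint2 : Integrable (B.indicator φ2) μ :=
    Integrable.mono' (integrable_const C)
      ((hφ2m.indicator hB).aestronglyMeasurable) (Filter.Eventually.of_forall hb2)
  have geq : (fun U => dist (S (if U ∈ A then m else if U ∈ B then l else j U)) U)
      = fun U => dist (S (j U)) U + A.indicator φ1 U + B.indicator φ2 U := by
    funext U
    by_cases hUA : U ∈ A
    · have hUB : U ∉ B := fun h => hdisj U hUA h
      have hjU : j U = l := hAj hUA
      simp [hUA, hUB, hjU, hφ1]
    · by_cases hUB : U ∈ B
      · have hjU : j U = m := hBj hUB
        simp [hUA, hUB, hjU, hφ2]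
      · simp [hUA, hUB]
  have hμA : (μ A).toReal > 0 :=
    ENNReal.toReal_pos hApos.ne' (measure_ne_top μ A)
  have hIA : ∫ U, A.indicator φ1 U ∂μ ≤ (μ A).toReal * (-a) := by
    rw [integral_indicator hA]
    have hintOn : IntegrableOn φ1 A μ := hint1.integrableOn.congr_fun
      (fun U hU => Set.indicator_of_mem hU φ1) hA
    calc ∫ U in A, φ1 U ∂μ ≤ ∫ _ in A, (-a) ∂μ := by
          apply setIntegral_mono_on hintOn (integrableOn_const (measure_ne_top μ A)) hA
          intro U hU
          have := ha U hU
          rw [dist_comm U (S l), dist_comm U (S m)] at this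
          simp only [hφ1]
          linarith
      _ = (μ A).toReal * (-a) := by rw [setIntegral_const]; rfl
  have hIB : ∫ U, B.indicator φ2 U ∂μ ≤ (μ B).toReal * b := by
    rw [integral_indicator hB]
    have hintOn : IntegrableOn φ2 B μ := hint2.integrableOn.congr_fun
      (fun U hU => Set.indicator_of_mem hU φ2) hB
    calc ∫ U in B, φ2 U ∂μ ≤ ∫ _ in B, b ∂μ := by
          apply setIntegral_mono_on hintOn (integrableOn_const (measure_ne_top μ B)) hB
          intro U hU
          have := hb U hU
          rw [dist_comm U (S l), dist_comm U (S m)] at this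
          simp only [hφ2]
          linarith
      _ = (μ B).toReal * b := by rw [setIntegral_const]; rfl
  constructor
  · rw [geq]
    have e1 : ∫ U, dist (S (j U)) U + A.indicator φ1 U + B.indicator φ2 U ∂μ
        = (∫ U, dist (S (j U)) U + A.indicator φ1 U ∂μ) + ∫ U, B.indicator φ2 U ∂μ :=
      integral_add (hint.add hint1) hint2
    have e2 : ∫ U, dist (S (j U)) U + A.indicator φ1 U ∂μ
        = (∫ U, dist (S (j U)) U ∂μ) + ∫ U, A.indicator φ1 U ∂μ :=
      integral_add hint hint1
    rw [e1, e2]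
    have hneg : (μ A).toReal * (b - a) < 0 :=
      mul_neg_of_pos_of_neg hμA (by linarith)
    rw [← hAB] at hIB
    nlinarith [hIA, hIB, hneg]
  · intro k
    by_cases hkl : k = l
    · subst hkl
      have hmk : ¬ m = k := hml
      have hset : (fun U => if U ∈ A then m else if U ∈ B then k else j U) ⁻¹' {k}
          = B ∪ (j ⁻¹' {k} \ A) := by
        ext U
        simp only [Set.mem_preimage, Set.mem_singleton_iff, Set.mem_union, Set.mem_diff]
        by_cases hUA : U ∈ A
        · have hUB : U ∉ B := fun h => hdisj U hUA h
          simp [hUA, hUB, hmk]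
        · by_cases hUB : U ∈ B
          · simp [hUA, hUB]
          · simp [hUA, hUB]
      rw [hset, measure_union _ ((hj (measurableSet_singleton k)).diff hA)]
      · rw [← hAB]
        have heq : μ A + μ (j ⁻¹' {k} \ A) = μ (j ⁻¹' {k}) := by
          have h1 : j ⁻¹' {k} ∩ A = A := Set.inter_eq_self_of_subset_right hAj
          have := measure_inter_add_diff (μ := μ) (j ⁻¹' {k}) hA
          rwa [h1] at this
        rw [heq]
      · refine Set.disjoint_left.2 fun U hUB ⟨hUk, hUA⟩ => ?_
        exact hmk ((hBj hUB).symm.trans hUk)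
    · by_cases hkm : k = m
      · subst hkm
        have hlk : ¬ l = k := fun h => hml h.symm
        have hset : (fun U => if U ∈ A then k else if U ∈ B then l else j U) ⁻¹' {k}
            = A ∪ (j ⁻¹' {k} \ B) := by
          ext U
          simp only [Set.mem_preimage, Set.mem_singleton_iff, Set.mem_union, Set.mem_diff]
          by_cases hUA : U ∈ A
          · have hUB : U ∉ B := fun h => hdisj U hUA h
            simp [hUA, hUB]
          · by_cases hUB : U ∈ B
            · simp [hUA, hUB, hlk]
            · simp [hUA, hUB]
        rw [hset, measure_union _ ((hj (measurableSet_singleton k)).diff hB)]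
        · rw [hAB]
          have heq : μ B + μ (j ⁻¹' {k} \ B) = μ (j ⁻¹' {k}) := by
            have h1 : j ⁻¹' {k} ∩ B = B := Set.inter_eq_self_of_subset_right hBj
            have := measure_inter_add_diff (μ := μ) (j ⁻¹' {k}) hB
            rwa [h1] at this
          rw [heq]
        · refine Set.disjoint_left.2 fun U hUA ⟨hUk, hUB⟩ => ?_
          exact hlk ((hAj hUA).symm.trans hUk)
      · have hmk : ¬ m = k := fun h => hkm h.symm
        have hlk : ¬ l = k := fun h => hkl h.symm
        have hset : (fun U => if U ∈ A then m else if U ∈ B then l else j U) ⁻¹' {k}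
            = j ⁻¹' {k} := by
          ext U
          simp only [Set.mem_preimage, Set.mem_singleton_iff]
          by_cases hUA : U ∈ A
          · have hjU : j U = l := hAj hUA
            simp [hUA, hjU, hmk, hlk]
          · by_cases hUB : U ∈ B
            · have hjU : j U = m := hBj hUB
              simp [hUA, hUB, hjU, hmk, hlk]
            · simp [hUA, hUB]
        rw [hset]
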